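/- Let d ≥ 1 be an integer, let H > 0, μ > 0, ν > 0, λ > 0, and let W ∈ ℝ^{d×d} be symmetric positive definite. Let N ≥ 1 and for each j ∈ {1,…,N} let φ_j ∈ ℝ^d with ‖φ_j‖ ≤ 1, let b_j ∈ [0, H], and let u_j ∈ ℝ^d with ‖u_j‖ ≤ 2; set v_j = W u_j and B_j = b_j · (v_j v_jᵀ)/‖v_j‖² if ‖v_j‖ ≥ μ and B_j = 0 otherwise. Let Σ = λ N I + Σ_{j=1}^N φ_j φ_jᵀ. Then for every z ∈ ℝ^d with ‖z‖ ≤ 1, writing z̃ = Proj_{S(W,ν)}(z): (i) |z̃ᵀ B_j z̃ − zᵀ B_j z| ≤ 4νH/μ for every j; and (ii) for every φ ∈ ℝ^d with ‖φ‖ ≤ 1, |Σ_{j=1}^N (φᵀ Σ^{-1} φ_j)(z̃ᵀ B_j z̃ − zᵀ B_j z)| ≤ 4νH/(μλ). -/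

import Mathlib

open Matrix

/-- `spectralSubspace A c` is the linear subspace of `ℝ^d` spanned by the eigenvectors of
`A` whose eigenvalues are at least `c`. -/
def spectralSubspace {d : ℕ} (A : Matrix (Fin d) (Fin d) ℝ) (c : ℝ) :
    Submodule ℝ (Fin d → ℝ) :=
  Submodule.span ℝ {v : Fin d → ℝ | ∃ μ : ℝ, c ≤ μ ∧ A *ᵥ v = μ • v}

/-- `IsOrthProjOnto P S` says that the matrix `P` is the orthogonal projection onto the
subspace `S`: every `P x` lies in `S` and `x - P x` is orthogonal to `S`. -/
def IsOrthProjOnto {d : ℕ} (P : Matrix (Fin d) (Fin d) ℝ)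
    (S : Submodule ℝ (Fin d → ℝ)) : Prop :=
  (∀ x, P *ᵥ x ∈ S) ∧ ∀ x, ∀ s ∈ S, (x - P *ᵥ x) ⬝ᵥ s = 0

namespace BonusProjAux

variable {d : ℕ}

lemma dotSelf_nonneg (x : Fin d → ℝ) : 0 ≤ x ⬝ᵥ x :=
  Finset.sum_nonneg fun i _ => mul_self_nonneg _

noncomputable def toE (x : Fin d → ℝ) : EuclideanSpace ℝ (Fin d) :=
  (WithLp.equiv 2 (Fin d → ℝ)).symm x

lemma sqrt_dot_eq_norm (x : Fin d → ℝ) : Real.sqrt (x ⬝ᵥ x) = ‖toE x‖ := by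
  rw [EuclideanSpace.norm_eq]
  congr 1
  simp [dotProduct, toE, Real.norm_eq_abs, sq_abs, sq]

lemma dot_eq_inner (x y : Fin d → ℝ) :
    x ⬝ᵥ y = (inner ℝ (toE x) (toE y) : ℝ) := by
  simp [PiLp.inner_apply, RCLike.inner_apply, dotProduct, toE, mul_comm]

lemma abs_dot_le (x y : Fin d → ℝ) :
    |x ⬝ᵥ y| ≤ Real.sqrt (x ⬝ᵥ x) * Real.sqrt (y ⬝ᵥ y) := by
  rw [dot_eq_inner, sqrt_dot_eq_norm, sqrt_dot_eq_norm]
  exact abs_real_inner_le_norm _ _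

lemma normE_sq (x : EuclideanSpace ℝ (Fin d)) : ‖x‖ ^ 2 = ∑ i, x i ^ 2 := by
  rw [EuclideanSpace.norm_eq, Real.sq_sqrt (Finset.sum_nonneg fun i _ => sq_nonneg _)]
  simp [Real.norm_eq_abs, sq_abs]

lemma norm_W_mulVec_le (W : Matrix (Fin d) (Fin d) ℝ) (hW : W.PosDef) {ν : ℝ} (hν : 0 < ν)
    (w : Fin d → ℝ) (hw : ∀ s ∈ spectralSubspace W ν, w ⬝ᵥ s = 0) :
    Real.sqrt ((W *ᵥ w) ⬝ᵥ (W *ᵥ w)) ≤ ν * Real.sqrt (w ⬝ᵥ w) := by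
  have hH := hW.isHermitian
  let Bb := hH.eigenvectorBasis
  let lam := hH.eigenvalues
  have hBb : Bb = hH.eigenvectorBasis := rfl
  have hlam : lam = hH.eigenvalues := rfl
  have hWt : Wᵀ = W := by
    rw [← Matrix.conjTranspose_eq_transpose_of_trivial]; exact hH
  have hrepr : ∀ (x : Fin d → ℝ) (i : Fin d), Bb.repr (toE x) i = (Bb i : Fin d → ℝ) ⬝ᵥ x := by
    intro x i
    rw [Bb.repr_apply_apply]
    exact (dot_eq_inner _ x).symm
  have hzero : ∀ i, ν ≤ lam i → Bb.repr (toE w) i = 0 := by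
    intro i hi
    rw [hrepr]
    have hmem : ((Bb i : Fin d → ℝ)) ∈ spectralSubspace W ν :=
      Submodule.subset_span ⟨lam i, hi, by rw [hBb, hlam]; exact hH.mulVec_eigenvectorBasis i⟩
    rw [dotProduct_comm]
    exact hw _ hmem
  have hWr : ∀ i, Bb.repr (toE (W *ᵥ w)) i = lam i * Bb.repr (toE w) i := by
    intro i
    rw [hrepr, hrepr]
    calc (Bb i : Fin d → ℝ) ⬝ᵥ (W *ᵥ w) = ((Bb i : Fin d → ℝ) ᵥ* W) ⬝ᵥ w :=
          dotProduct_mulVec _ _ _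
      _ = (W *ᵥ (Bb i : Fin d → ℝ)) ⬝ᵥ w := by rw [← mulVec_transpose, hWt]
      _ = (lam i • (Bb i : Fin d → ℝ)) ⬝ᵥ w := by
            rw [hBb, hlam]
            exact congrArg (· ⬝ᵥ w) (hH.mulVec_eigenvectorBasis i)
      _ = lam i * ((Bb i : Fin d → ℝ) ⬝ᵥ w) := smul_dotProduct _ _ _
  have key : ∑ i, (Bb.repr (toE (W *ᵥ w)) i) ^ 2 ≤ ν ^ 2 * ∑ i, (Bb.repr (toE w) i) ^ 2 := by
    rw [Finset.mul_sum]
    apply Finset.sum_le_sum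
    intro i _
    rw [hWr]
    by_cases hcase : ν ≤ lam i
    · rw [hzero i hcase]; simp
    · push_neg at hcase
      have hpos := hW.eigenvalues_pos i
      have h2 : lam i ^ 2 ≤ ν ^ 2 := by nlinarith
      rw [mul_pow]
      nlinarith [sq_nonneg (Bb.repr (toE w) i)]
  rw [sqrt_dot_eq_norm, sqrt_dot_eq_norm]
  have e1 : ‖toE (W *ᵥ w)‖ ^ 2 = ∑ i, (Bb.repr (toE (W *ᵥ w)) i) ^ 2 := by
    rw [← Bb.repr.norm_map (toE (W *ᵥ w)), normE_sq]
  have e2 : ‖toE w‖ ^ 2 = ∑ i, (Bb.repr (toE w) i) ^ 2 := by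
    rw [← Bb.repr.norm_map (toE w), normE_sq]
  have hsq : ‖toE (W *ᵥ w)‖ ^ 2 ≤ (ν * ‖toE w‖) ^ 2 := by
    rw [e1, mul_pow, e2]; exact key
  have := Real.sqrt_le_sqrt hsq
  rwa [Real.sqrt_sq (norm_nonneg _), Real.sqrt_sq (by positivity)] at this

lemma proj_bounds {S : Submodule ℝ (Fin d → ℝ)} {P : Matrix (Fin d) (Fin d) ℝ}
    (hP : IsOrthProjOnto P S) (z : Fin d → ℝ) :
    (P *ᵥ z) ⬝ᵥ (P *ᵥ z) ≤ z ⬝ᵥ z ∧ (z - P *ᵥ z) ⬝ᵥ (z - P *ᵥ z) ≤ z ⬝ᵥ z := by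
  obtain ⟨hmem, horth⟩ := hP
  set p := P *ᵥ z with hp
  have h0 : (z - p) ⬝ᵥ p = 0 := horth z p (hmem z)
  have h0' : p ⬝ᵥ (z - p) = 0 := by rw [dotProduct_comm]; exact h0
  have hz : z ⬝ᵥ z = p ⬝ᵥ p + (z - p) ⬝ᵥ (z - p) := by
    have hzz : z ⬝ᵥ z = (p + (z - p)) ⬝ᵥ (p + (z - p)) := by rw [add_sub_cancel]
    rw [hzz, add_dotProduct, dotProduct_add, dotProduct_add, h0', dotProduct_comm (z-p) p] at *
    linarith [h0]
  constructor
  · linarith [dotSelf_nonneg (z - p)]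
  · linarith [dotSelf_nonneg p]

lemma vecMulVec_mulVec_eq (a c x : Fin d → ℝ) :
    vecMulVec a c *ᵥ x = (c ⬝ᵥ x) • a := by
  ext i
  simp [vecMulVec_apply, mulVec, dotProduct, Finset.mul_sum, mul_comm, mul_assoc, mul_left_comm]

lemma quad_Sig (N : ℕ) (lam : ℝ) (φ : Fin N → Fin d → ℝ)
    (Sig : Matrix (Fin d) (Fin d) ℝ)
    (hSig : Sig = (lam * (N : ℝ)) • (1 : Matrix (Fin d) (Fin d) ℝ) +
      ∑ j, vecMulVec (φ j) (φ j)) (y : Fin d → ℝ) :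
    y ⬝ᵥ (Sig *ᵥ y) = lam * N * (y ⬝ᵥ y) + ∑ j, (φ j ⬝ᵥ y) ^ 2 := by
  let L : Matrix (Fin d) (Fin d) ℝ →ₗ[ℝ] ℝ :=
    { toFun := fun M => y ⬝ᵥ (M *ᵥ y)
      map_add' := by intro M M'; simp [add_mulVec, dotProduct_add]
      map_smul' := by intro r M; simp [smul_mulVec, dotProduct_smul] }
  have hL : ∀ M : Matrix (Fin d) (Fin d) ℝ, L M = y ⬝ᵥ (M *ᵥ y) := fun _ => rfl
  have h1 : y ⬝ᵥ (Sig *ᵥ y) = L Sig := rfl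
  rw [h1, hSig, map_add, map_sum, hL]
  congr 1
  · simp [smul_mulVec, dotProduct_smul, mul_assoc]
  · apply Finset.sum_congr rfl
    intro j _
    rw [hL, vecMulVec_mulVec_eq, dotProduct_smul, smul_eq_mul, dotProduct_comm, sq]

lemma Sig_posdef {N : ℕ} (hN : 1 ≤ N) {lam : ℝ} (hlam : 0 < lam) (φ : Fin N → Fin d → ℝ)
    (Sig : Matrix (Fin d) (Fin d) ℝ)
    (hSig : Sig = (lam * (N : ℝ)) • (1 : Matrix (Fin d) (Fin d) ℝ) +
      ∑ j, vecMulVec (φ j) (φ j)) : Sig.PosDef := by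
  have hN0 : 0 < (N : ℝ) := by exact_mod_cast hN
  rw [posDef_iff_dotProduct_mulVec]
  constructor
  · rw [hSig]
    have h1 : ((lam * (N : ℝ)) • (1 : Matrix (Fin d) (Fin d) ℝ)).IsHermitian := by
      unfold Matrix.IsHermitian
      ext i k
      simp [Matrix.conjTranspose_apply, Matrix.smul_apply, Matrix.one_apply]
      rcases eq_or_ne i k with h | h
      · simp [h]
      · simp [h, Ne.symm h]
    have h2 : (∑ j, vecMulVec (φ j) (φ j)).IsHermitian := by
      unfold Matrix.IsHermitian
      ext i k
      simp [Matrix.conjTranspose_apply, Matrix.sum_apply, vecMulVec_apply, mul_comm]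
    exact h1.add h2
  · intro x hx
    have hsx : star x = x := by simp
    rw [hsx, quad_Sig N lam φ Sig hSig x]
    have hxx : 0 < x ⬝ᵥ x := by
      rcases (Function.ne_iff).mp hx with ⟨i, hi⟩
      have : 0 < x i * x i := by
        have := mul_self_nonneg (x i); rcases lt_or_eq_of_le this with h | h
        · exact h
        · exact absurd (by nlinarith [sq_abs (x i), sq_nonneg (x i)] : x i = 0) hi
      calc 0 < x i * x i := this
        _ ≤ ∑ k, x k * x k := Finset.single_le_sum (fun k _ => mul_self_nonneg (x k)) (Finset.mem_univ i)
    have hs : 0 ≤ ∑ j, (φ j ⬝ᵥ x) ^ 2 := Finset.sum_nonneg fun j _ => sq_nonneg _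
    have : 0 < lam * N * (x ⬝ᵥ x) := by positivity
    linarith

lemma Sig_inv_vec_bound {N : ℕ} (hN : 1 ≤ N) {lam : ℝ} (hlam : 0 < lam)
    (φ : Fin N → Fin d → ℝ) (Sig : Matrix (Fin d) (Fin d) ℝ)
    (hSig : Sig = (lam * (N : ℝ)) • (1 : Matrix (Fin d) (Fin d) ℝ) +
      ∑ j, vecMulVec (φ j) (φ j))
    (c : Fin d → ℝ) (hc : Real.sqrt (c ⬝ᵥ c) ≤ 1) :
    Real.sqrt ((Sig⁻¹ *ᵥ c) ⬝ᵥ (Sig⁻¹ *ᵥ c)) ≤ 1 / (lam * N) := by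
  have hN0 : 0 < (N : ℝ) := by exact_mod_cast hN
  have hPD := Sig_posdef hN hlam φ Sig hSig
  have hdet : IsUnit Sig.det := (Matrix.isUnit_iff_isUnit_det _).mp hPD.isUnit
  set y := Sig⁻¹ *ᵥ c with hy
  have hSy : Sig *ᵥ y = c := by
    rw [hy, mulVec_mulVec, Matrix.mul_nonsing_inv _ hdet, one_mulVec]
  set t := Real.sqrt (y ⬝ᵥ y) with ht
  have ht0 : 0 ≤ t := Real.sqrt_nonneg _
  have hyy : y ⬝ᵥ y = t ^ 2 := (Real.sq_sqrt (dotSelf_nonneg y)).symm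
  have h1 : lam * N * (y ⬝ᵥ y) + ∑ j, (φ j ⬝ᵥ y) ^ 2 = y ⬝ᵥ c := by
    rw [← quad_Sig N lam φ Sig hSig y, hSy]
  have h2 : y ⬝ᵥ c ≤ t := by
    calc y ⬝ᵥ c ≤ |y ⬝ᵥ c| := le_abs_self _
      _ ≤ Real.sqrt (y ⬝ᵥ y) * Real.sqrt (c ⬝ᵥ c) := abs_dot_le y c
      _ ≤ t * 1 := by rw [← ht]; exact mul_le_mul_of_nonneg_left hc ht0
      _ = t := mul_one t
  have hs : 0 ≤ ∑ j, (φ j ⬝ᵥ y) ^ 2 := Finset.sum_nonneg fun j _ => sq_nonneg _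
  have h3 : lam * N * t ^ 2 ≤ t := by rw [← hyy]; linarith
  rcases eq_or_lt_of_le ht0 with h | h
  · rw [← h]; positivity
  · rw [div_eq_inv_mul, mul_one]
    nlinarith [mul_pos (mul_pos hlam hN0) h, mul_inv_cancel₀ (ne_of_gt (mul_pos hlam hN0))]

end BonusProjAux

open BonusProjAux

/-- **Effect of the preconditioning-subspace projection on empirical bonus matrices
(Lemma `theta-precond-norm-bound`).**  With `v_j = W u_j`, bonus matrices
`B_j = 1{‖v_j‖ ≥ μ} · b_j · v_j v_jᵀ/‖v_j‖²` with `b_j ∈ [0, H]`, and regularized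
covariance `Σ = λNI + ∑_j φ_j φ_jᵀ` of unit-ball feature vectors `φ_j`, for every unit
vector `z` with projection `z̃` onto the span of eigenvectors of `W` with eigenvalue at
least `ν`: (i) each quadratic form changes by at most `4νH/μ`, and
(ii) `|∑_j (φᵀ Σ⁻¹ φ_j)(z̃ᵀ B_j z̃ − zᵀ B_j z)| ≤ 4νH/(μλ)` for any unit vector `φ`. -/
theorem bonus_matrix_projection_stability {d N : ℕ} (hd : 1 ≤ d) (hN : 1 ≤ N)
    (H μ ν lam : ℝ) (hH : 0 < H) (hμ : 0 < μ) (hν : 0 < ν) (hlam : 0 < lam)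
    (W : Matrix (Fin d) (Fin d) ℝ) (hW : W.PosDef)
    (φ : Fin N → Fin d → ℝ) (hφ : ∀ j, Real.sqrt (φ j ⬝ᵥ φ j) ≤ 1)
    (b : Fin N → ℝ) (hb : ∀ j, b j ∈ Set.Icc (0 : ℝ) H)
    (u : Fin N → Fin d → ℝ) (hu : ∀ j, Real.sqrt (u j ⬝ᵥ u j) ≤ 2)
    (v : Fin N → Fin d → ℝ) (hv : ∀ j, v j = W *ᵥ u j)
    (B : Fin N → Matrix (Fin d) (Fin d) ℝ)
    (hB : ∀ j, B j = if μ ≤ Real.sqrt (v j ⬝ᵥ v j)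
      then (b j * (v j ⬝ᵥ v j)⁻¹) • vecMulVec (v j) (v j) else 0)
    (Sig : Matrix (Fin d) (Fin d) ℝ)
    (hSig : Sig = (lam * (N : ℝ)) • (1 : Matrix (Fin d) (Fin d) ℝ) +
      ∑ j, vecMulVec (φ j) (φ j))
    (Pr : Matrix (Fin d) (Fin d) ℝ) (hPr : IsOrthProjOnto Pr (spectralSubspace W ν))
    (z : Fin d → ℝ) (hz : Real.sqrt (z ⬝ᵥ z) ≤ 1) :
    (∀ j, |(Pr *ᵥ z) ⬝ᵥ (B j *ᵥ (Pr *ᵥ z)) - z ⬝ᵥ (B j *ᵥ z)| ≤ 4 * ν * H / μ) ∧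
    (∀ φ₀ : Fin d → ℝ, Real.sqrt (φ₀ ⬝ᵥ φ₀) ≤ 1 →
      |∑ j, (φ₀ ⬝ᵥ (Sig⁻¹ *ᵥ φ j)) *
        ((Pr *ᵥ z) ⬝ᵥ (B j *ᵥ (Pr *ᵥ z)) - z ⬝ᵥ (B j *ᵥ z))| ≤ 4 * ν * H / (μ * lam)) := by
  obtain ⟨hmem, horth⟩ := hPr
  set zt := Pr *ᵥ z with hzt
  set w := z - zt with hwdef
  have hpb := proj_bounds ⟨hmem, horth⟩ z
  have hzt1 : Real.sqrt (zt ⬝ᵥ zt) ≤ 1 := le_trans (Real.sqrt_le_sqrt hpb.1) hz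
  have hw1 : Real.sqrt (w ⬝ᵥ w) ≤ 1 := le_trans (Real.sqrt_le_sqrt hpb.2) hz
  have hWw : Real.sqrt ((W *ᵥ w) ⬝ᵥ (W *ᵥ w)) ≤ ν := by
    refine le_trans (norm_W_mulVec_le W hW hν w (fun s hs => horth z s hs)) ?_
    calc ν * Real.sqrt (w ⬝ᵥ w) ≤ ν * 1 := mul_le_mul_of_nonneg_left hw1 hν.le
      _ = ν := mul_one ν
  have hWt : Wᵀ = W := by
    rw [← Matrix.conjTranspose_eq_transpose_of_trivial]; exact hW.isHermitian
  have hvw : ∀ j, |v j ⬝ᵥ w| ≤ 2 * ν := by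
    intro j
    have heq : v j ⬝ᵥ w = (W *ᵥ w) ⬝ᵥ u j := by
      rw [hv j, dotProduct_comm, dotProduct_mulVec, ← mulVec_transpose, hWt]
    rw [heq]
    calc |(W *ᵥ w) ⬝ᵥ u j| ≤ Real.sqrt ((W *ᵥ w) ⬝ᵥ (W *ᵥ w)) * Real.sqrt (u j ⬝ᵥ u j) :=
          abs_dot_le _ _
      _ ≤ ν * 2 := mul_le_mul hWw (hu j) (Real.sqrt_nonneg _) hν.le
      _ = 2 * ν := by ring
  have key : ∀ j, |zt ⬝ᵥ (B j *ᵥ zt) - z ⬝ᵥ (B j *ᵥ z)| ≤ 4 * ν * H / μ := by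
    intro j
    rw [hB j]
    by_cases hcase : μ ≤ Real.sqrt (v j ⬝ᵥ v j)
    · rw [if_pos hcase]
      have hs0 : 0 < Real.sqrt (v j ⬝ᵥ v j) := lt_of_lt_of_le hμ hcase
      have hvv : v j ⬝ᵥ v j = Real.sqrt (v j ⬝ᵥ v j) ^ 2 :=
        (Real.sq_sqrt (dotSelf_nonneg _)).symm
      have hform : ∀ x : Fin d → ℝ,
          x ⬝ᵥ (((b j * (v j ⬝ᵥ v j)⁻¹) • vecMulVec (v j) (v j)) *ᵥ x)
            = (b j * (v j ⬝ᵥ v j)⁻¹) * (v j ⬝ᵥ x) ^ 2 := by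
        intro x
        rw [smul_mulVec, dotProduct_smul, vecMulVec_mulVec_eq, dotProduct_smul,
          smul_eq_mul, smul_eq_mul, dotProduct_comm x (v j), sq]
      rw [hform, hform]
      have hc0 : 0 ≤ b j * (v j ⬝ᵥ v j)⁻¹ :=
        mul_nonneg (hb j).1 (by rw [hvv]; positivity)
      have hfac : (b j * (v j ⬝ᵥ v j)⁻¹) * (v j ⬝ᵥ zt) ^ 2
            - (b j * (v j ⬝ᵥ v j)⁻¹) * (v j ⬝ᵥ z) ^ 2
          = (b j * (v j ⬝ᵥ v j)⁻¹) * ((v j ⬝ᵥ zt) + (v j ⬝ᵥ z))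
            * ((v j ⬝ᵥ zt) - (v j ⬝ᵥ z)) := by ring
      rw [hfac, abs_mul, abs_mul, abs_of_nonneg hc0]
      have h1 : |v j ⬝ᵥ zt| ≤ Real.sqrt (v j ⬝ᵥ v j) := by
        calc |v j ⬝ᵥ zt| ≤ Real.sqrt (v j ⬝ᵥ v j) * Real.sqrt (zt ⬝ᵥ zt) := abs_dot_le _ _
          _ ≤ Real.sqrt (v j ⬝ᵥ v j) * 1 := mul_le_mul_of_nonneg_left hzt1 hs0.le
          _ = Real.sqrt (v j ⬝ᵥ v j) := mul_one _
      have h2 : |v j ⬝ᵥ z| ≤ Real.sqrt (v j ⬝ᵥ v j) := by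
        calc |v j ⬝ᵥ z| ≤ Real.sqrt (v j ⬝ᵥ v j) * Real.sqrt (z ⬝ᵥ z) := abs_dot_le _ _
          _ ≤ Real.sqrt (v j ⬝ᵥ v j) * 1 := mul_le_mul_of_nonneg_left hz hs0.le
          _ = Real.sqrt (v j ⬝ᵥ v j) := mul_one _
      have h3 : |(v j ⬝ᵥ zt) - (v j ⬝ᵥ z)| ≤ 2 * ν := by
        have heq2 : (v j ⬝ᵥ zt) - (v j ⬝ᵥ z) = -(v j ⬝ᵥ w) := by
          rw [hwdef, dotProduct_sub]; ring
        rw [heq2, abs_neg]; exact hvw j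
      have h4 : |(v j ⬝ᵥ zt) + (v j ⬝ᵥ z)| ≤ 2 * Real.sqrt (v j ⬝ᵥ v j) :=
        (abs_add_le _ _).trans (by linarith)
      calc b j * (v j ⬝ᵥ v j)⁻¹ * |(v j ⬝ᵥ zt) + (v j ⬝ᵥ z)| * |(v j ⬝ᵥ zt) - (v j ⬝ᵥ z)|
          ≤ b j * (v j ⬝ᵥ v j)⁻¹ * (2 * Real.sqrt (v j ⬝ᵥ v j)) * (2 * ν) := by
            apply mul_le_mul (mul_le_mul le_rfl h4 (abs_nonneg _) hc0) h3 (abs_nonneg _)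
              (by positivity)
        _ = 4 * ν * (b j / Real.sqrt (v j ⬝ᵥ v j)) := by
            rw [hvv]; field_simp; rw [Real.sqrt_sq hs0.le]; ring
        _ ≤ 4 * ν * (H / μ) := by
            apply mul_le_mul_of_nonneg_left (div_le_div₀ hH.le (hb j).2 hμ hcase)
              (by positivity)
        _ = 4 * ν * H / μ := by ring
    · rw [if_neg hcase]
      simp only [Matrix.zero_mulVec, dotProduct_zero, sub_zero, sub_self, abs_zero]
      positivity
  refine ⟨key, ?_⟩
  intro φ₀ hφ₀
  have hN0 : (0 : ℝ) < N := by exact_mod_cast hN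
  have habs : ∀ j, |φ₀ ⬝ᵥ (Sig⁻¹ *ᵥ φ j)| ≤ 1 / (lam * N) := by
    intro j
    calc |φ₀ ⬝ᵥ (Sig⁻¹ *ᵥ φ j)|
        ≤ Real.sqrt (φ₀ ⬝ᵥ φ₀) * Real.sqrt ((Sig⁻¹ *ᵥ φ j) ⬝ᵥ (Sig⁻¹ *ᵥ φ j)) := abs_dot_le _ _
      _ ≤ 1 * (1 / (lam * N)) := by
          apply mul_le_mul hφ₀ (Sig_inv_vec_bound hN hlam φ Sig hSig (φ j) (hφ j))
            (Real.sqrt_nonneg _) zero_le_one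
      _ = 1 / (lam * N) := one_mul _
  calc |∑ j, (φ₀ ⬝ᵥ (Sig⁻¹ *ᵥ φ j)) * (zt ⬝ᵥ (B j *ᵥ zt) - z ⬝ᵥ (B j *ᵥ z))|
      ≤ ∑ j, |(φ₀ ⬝ᵥ (Sig⁻¹ *ᵥ φ j)) * (zt ⬝ᵥ (B j *ᵥ zt) - z ⬝ᵥ (B j *ᵥ z))| :=
        Finset.abs_sum_le_sum_abs _ _
    _ ≤ ∑ _j : Fin N, (1 / (lam * N)) * (4 * ν * H / μ) := by
        apply Finset.sum_le_sum
        intro j _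
        rw [abs_mul]
        apply mul_le_mul (habs j) (key j) (abs_nonneg _) (by positivity)
    _ = N * ((1 / (lam * N)) * (4 * ν * H / μ)) := by
        rw [Finset.sum_const, Finset.card_univ, Fintype.card_fin, nsmul_eq_mul]
    _ = 4 * ν * H / (μ * lam) := by
        field_simp
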